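/- arXiv:1411.1211 — 5 statements merged into one kernel-verified Lean document; each statement's English description precedes it below -/
import Mathlib

section
/- Let E be a finite-dimensional real normed vector space, let C ⊆ E be a nonempty closed convex subset, and let T : C → C be nonexpansive (i.e. ‖T(x) − T(y)‖ ≤ ‖x − y‖ for all x, y ∈ C) with nonempty fixed-point set Fix(T). Then Fix(T) is a nonexpansive retract of C: there exists a nonexpansive map ρ : C → C with ρ(C) = Fix(T) and ρ(x) = x for every x ∈ Fix(T). -/
open Filter Topology

private lemma two_pow_ge {n : ℕ} : ((n:ℝ) + 2) ≤ 2 ^ (n+1) := by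
  induction n with
  | zero => norm_num
  | succ n ih =>
    have h2 : (2:ℝ)^(n+1+1) = 2 * 2^(n+1) := by ring
    push_cast
    push_cast at ih
    nlinarith

theorem bruck_key {E : Type*} [NormedAddCommGroup E] [NormedSpace ℝ E]
    [FiniteDimensional ℝ E]
    (C : Set E) (hCclosed : IsClosed C) (hCconv : Convex ℝ C)
    (T : E → E) (hTC : Set.MapsTo T C C)
    (hTne : ∀ x ∈ C, ∀ y ∈ C, ‖T x - T y‖ ≤ ‖x - y‖)
    (p : E) (hpC : p ∈ C) (hp : T p = p)
    (x : E) (hx : x ∈ C) :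
    ∃ z ∈ C, T z = z ∧
      Tendsto (fun n => (fun y => (2⁻¹ : ℝ) • (y + T y))^[n] x) atTop (𝓝 z) := by
  set S : E → E := fun y => (2⁻¹ : ℝ) • (y + T y) with hSdef
  have hSmem : ∀ y ∈ C, S y ∈ C := by
    intro y hy
    have h := hCconv hy (hTC hy) (by norm_num : (0:ℝ) ≤ 2⁻¹)
      (by norm_num : (0:ℝ) ≤ 2⁻¹) (by norm_num)
    simpa [hSdef, smul_add] using h
  set u : ℕ → E := fun n => S^[n] x with hudef
  have husucc : ∀ n, u (n+1) = S (u n) := fun n => Function.iterate_succ_apply' S n x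
  have humem : ∀ n, u n ∈ C := by
    intro n
    induction n with
    | zero => exact hx
    | succ n ih => rw [husucc]; exact hSmem _ ih
  set D : ℕ → ℝ := fun n => ‖T (u n) - u n‖ with hDdef
  have hDnn : ∀ n, 0 ≤ D n := fun n => norm_nonneg _
  have hstep : ∀ n, u (n+1) - u n = (2⁻¹:ℝ) • (T (u n) - u n) := by
    intro n; rw [husucc]; simp only [hSdef]; module
  have hstepnorm : ∀ n, ‖u (n+1) - u n‖ = 2⁻¹ * D n := by
    intro n; rw [hstep, norm_smul]; norm_num [hDdef]
  have hgap : ∀ n, T (u n) - u (n+1) = (2⁻¹:ℝ) • (T (u n) - u n) := by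
    intro n; rw [husucc]; simp only [hSdef]; module
  have hDsucc : ∀ n, D (n+1) ≤ D n := by
    intro n
    have h1 : T (u (n+1)) - u (n+1)
        = (T (u (n+1)) - T (u n)) + (T (u n) - u (n+1)) := by abel
    have h2 : ‖T (u (n+1)) - u (n+1)‖
        ≤ ‖T (u (n+1)) - T (u n)‖ + ‖T (u n) - u (n+1)‖ := by
      rw [h1]; exact norm_add_le _ _
    have h3 : ‖T (u (n+1)) - T (u n)‖ ≤ ‖u (n+1) - u n‖ :=
      hTne _ (humem _) _ (humem _)
    have h4 : ‖T (u n) - u (n+1)‖ = 2⁻¹ * D n := by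
      rw [hgap, norm_smul]; norm_num [hDdef]
    have h5 := hstepnorm n
    simp only [hDdef] at *
    linarith
  have hDanti : Antitone D := antitone_nat_of_succ_le hDsucc
  have hdiff : ∀ i m, ‖u (i+m) - u i‖ ≤ (m:ℝ) / 2 * D i := by
    intro i m
    induction m with
    | zero => simp
    | succ m ih =>
      have h1 : ‖u (i+m+1) - u i‖ ≤ ‖u (i+m+1) - u (i+m)‖ + ‖u (i+m) - u i‖ :=
        norm_sub_le_norm_sub_add_norm_sub _ _ _
      have h2 := hstepnorm (i+m)
      have h3 : D (i+m) ≤ D i := hDanti (Nat.le_add_right i m)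
      have e : i + (m+1) = i + m + 1 := by omega
      rw [e]
      push_cast
      linarith
  have hGK : ∀ n i, (2:ℝ)^n * (D (i+n) - D i) + (1 + (n:ℝ)/2) * D i
      ≤ ‖T (u (i+n)) - u i‖ := by
    intro n
    induction n with
    | zero =>
      intro i
      simp only [Nat.add_zero, pow_zero, Nat.cast_zero]
      have : (1:ℝ) * (D i - D i) + (1 + 0/2) * D i = D i := by ring
      rw [this]
    | succ n ih =>
      intro i
      have e1 : i + (n+1) = (i+1) + n := by omega
      rw [e1]
      have IH := ih (i+1)
      set A := T (u (i+1+n)) with hA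
      have hid : (2:ℝ) • (A - u (i+1)) = (A - u i) + (A - T (u i)) := by
        have h := husucc i
        rw [h]; simp only [hSdef]; module
      have h2 : 2 * ‖A - u (i+1)‖ ≤ ‖A - u i‖ + ‖A - T (u i)‖ := by
        calc 2 * ‖A - u (i+1)‖ = ‖(2:ℝ) • (A - u (i+1))‖ := by
              rw [norm_smul]; norm_num
        _ = ‖(A - u i) + (A - T (u i))‖ := by rw [hid]
        _ ≤ ‖A - u i‖ + ‖A - T (u i)‖ := norm_add_le _ _
      have h3 : ‖A - T (u i)‖ ≤ ‖u (i+1+n) - u i‖ := hTne _ (humem _) _ (humem _)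
      have h4 : ‖u (i+1+n) - u i‖ ≤ ((n:ℝ)+1) / 2 * D i := by
        have h := hdiff i (n+1)
        have e2 : i + (n+1) = i + 1 + n := by omega
        rw [e2] at h
        push_cast at h
        linarith
      have h5 : D (i+1) ≤ D i := hDsucc i
      have hpow : ((n:ℝ)+2) ≤ 2^(n+1) := two_pow_ge
      have hprod : 0 ≤ (2 * (2:ℝ)^n - ((n:ℝ)+2)) * (D i - D (i+1)) := by
        apply mul_nonneg
        · have : (2:ℝ)^(n+1) = 2 * 2^n := by ring
          linarith [this ▸ hpow]
        · linarith
      rw [pow_succ]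
      push_cast
      nlinarith [IH, h2, h3, h4, hprod, mul_nonneg (pow_nonneg (by norm_num : (0:ℝ) ≤ 2) n) (hDnn (i+1+n))]
  -- boundedness
  have hcontract : ∀ w ∈ C, T w = w → ∀ n, ‖u (n+1) - w‖ ≤ ‖u n - w‖ := by
    intro w hw hTw n
    have hid : u (n+1) - w = (2⁻¹:ℝ) • ((u n - w) + (T (u n) - T w)) := by
      rw [husucc, hTw]; simp only [hSdef]; module
    have h1 : ‖T (u n) - T w‖ ≤ ‖u n - w‖ := hTne _ (humem _) _ hw
    calc ‖u (n+1) - w‖ = 2⁻¹ * ‖(u n - w) + (T (u n) - T w)‖ := by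
          rw [hid, norm_smul]; norm_num
    _ ≤ 2⁻¹ * (‖u n - w‖ + ‖T (u n) - T w‖) := by
          have := norm_add_le (u n - w) (T (u n) - T w)
          linarith
    _ ≤ ‖u n - w‖ := by linarith
  have hup : ∀ n, ‖u n - p‖ ≤ ‖x - p‖ := by
    intro n
    induction n with
    | zero => exact le_refl _
    | succ n ih => exact le_trans (hcontract p hpC hp n) ih
  have hMb : ∀ i n, ‖T (u (i+n)) - u i‖ ≤ 2 * ‖x - p‖ := by
    intro i n
    have h1 : ‖T (u (i+n)) - u i‖ ≤ ‖T (u (i+n)) - p‖ + ‖p - u i‖ :=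
      norm_sub_le_norm_sub_add_norm_sub _ _ _
    have h2 : ‖T (u (i+n)) - p‖ ≤ ‖u (i+n) - p‖ := by
      have := hTne _ (humem (i+n)) p hpC
      rwa [hp] at this
    have h3 : ‖p - u i‖ = ‖u i - p‖ := norm_sub_rev _ _
    have h4 := hup (i+n)
    have h5 := hup i
    linarith
  -- D tends to 0
  have hbdd : BddBelow (Set.range D) := ⟨0, by rintro y ⟨n, rfl⟩; exact hDnn n⟩
  have hDlim : Tendsto D atTop (𝓝 (⨅ n, D n)) := tendsto_atTop_ciInf hDanti hbdd
  have hdle : ∀ n, (⨅ m, D m) ≤ D n := fun n => ciInf_le hbdd n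
  have hd0 : (0:ℝ) ≤ ⨅ n, D n := le_ciInf hDnn
  have hdzero : (⨅ n, D n) = 0 := by
    by_contra hne
    have hdpos : 0 < ⨅ n, D n := lt_of_le_of_ne hd0 (Ne.symm hne)
    set d := ⨅ n, D n with hddef
    set M := 2 * ‖x - p‖ with hMdef
    obtain ⟨n, hn⟩ := exists_nat_gt (2 * (M + 1) / d)
    have hn2 : 2 * (M + 1) < (n:ℝ) * d := by
      rw [div_lt_iff₀ hdpos] at hn; linarith
    have hev : ∀ᶠ i in atTop, D i < d + ((2:ℝ)^n)⁻¹ :=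
      hDlim.eventually (gt_mem_nhds (lt_add_of_pos_right _ (by positivity)))
    obtain ⟨i, hi⟩ := hev.exists
    have hGKni := hGK n i
    have hM := hMb i n
    have h2n : (0:ℝ) < 2^n := by positivity
    have hA : (-1:ℝ) ≤ (2:ℝ)^n * (D (i+n) - D i) := by
      have h1 : -((2:ℝ)^n)⁻¹ ≤ D (i+n) - D i := by
        have := hdle (i+n); linarith
      have h2 : (2:ℝ)^n * (-((2:ℝ)^n)⁻¹) ≤ (2:ℝ)^n * (D (i+n) - D i) :=
        mul_le_mul_of_nonneg_left h1 (le_of_lt h2n)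
      have h3 : (2:ℝ)^n * (-((2:ℝ)^n)⁻¹) = -1 := by field_simp
      linarith
    have hB : (1 + (n:ℝ)/2) * d ≤ (1 + (n:ℝ)/2) * D i :=
      mul_le_mul_of_nonneg_left (hdle i) (by positivity)
    nlinarith
  have hD0 : Tendsto D atTop (𝓝 0) := hdzero ▸ hDlim
  -- compactness
  have hubdd : ∀ n, u n ∈ Metric.closedBall p ‖x - p‖ := by
    intro n
    rw [Metric.mem_closedBall, dist_eq_norm]
    exact hup n
  have hcpt : IsCompact (Metric.closedBall p ‖x - p‖) := isCompact_closedBall p _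
  obtain ⟨z, _, φ, hφ, hzt⟩ := hcpt.tendsto_subseq hubdd
  have hzC : z ∈ C := hCclosed.mem_of_tendsto hzt
    (Filter.Eventually.of_forall fun k => humem (φ k))
  have hn1 : Tendsto (fun k => ‖u (φ k) - z‖) atTop (𝓝 0) := by
    have h := (hzt.sub (tendsto_const_nhds (x := z))).norm
    simpa using h
  have hTz : T z = z := by
    have key : ∀ k, ‖T z - z‖ ≤ 2 * ‖u (φ k) - z‖ + D (φ k) := by
      intro k
      have h1 : ‖T z - T (u (φ k))‖ ≤ ‖z - u (φ k)‖ := hTne z hzC _ (humem _)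
      have hid : T z - z = (T z - T (u (φ k))) + (T (u (φ k)) - u (φ k))
          + (u (φ k) - z) := by abel
      have h2 : ‖T z - z‖ ≤ ‖T z - T (u (φ k))‖ + ‖T (u (φ k)) - u (φ k)‖
          + ‖u (φ k) - z‖ := by
        rw [hid]; exact norm_add₃_le
      have h3 : ‖z - u (φ k)‖ = ‖u (φ k) - z‖ := norm_sub_rev _ _
      simp only [hDdef]
      linarith
    have hrhs : Tendsto (fun k => 2 * ‖u (φ k) - z‖ + D (φ k)) atTop (𝓝 0) := by
      have h1 := hn1.const_mul 2
      have h2 := hD0.comp hφ.tendsto_atTop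
      have h := h1.add h2
      simpa using h
    have h0 : ‖T z - z‖ ≤ 0 := ge_of_tendsto' hrhs key
    have : ‖T z - z‖ = 0 := le_antisymm h0 (norm_nonneg _)
    rwa [norm_sub_eq_zero_iff] at this
  -- full convergence
  refine ⟨z, hzC, hTz, ?_⟩
  set a : ℕ → ℝ := fun n => ‖u n - z‖ with hadef
  have haanti : Antitone a := antitone_nat_of_succ_le (hcontract z hzC hTz)
  have habdd : BddBelow (Set.range a) :=
    ⟨0, by rintro y ⟨n, rfl⟩; exact norm_nonneg _⟩
  have halim : Tendsto a atTop (𝓝 (⨅ n, a n)) := tendsto_atTop_ciInf haanti habdd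
  have hsub : Tendsto (a ∘ φ) atTop (𝓝 (⨅ n, a n)) := halim.comp hφ.tendsto_atTop
  have hzero : (⨅ n, a n) = 0 := tendsto_nhds_unique hsub hn1
  have ha0 : Tendsto a atTop (𝓝 0) := hzero ▸ halim
  have : Tendsto (fun n => u n - z) atTop (𝓝 0) := by
    rw [tendsto_zero_iff_norm_tendsto_zero]
    exact ha0
  have h := this.add (tendsto_const_nhds (x := z))
  simpa using h


/-- Bruck: let `E` be a finite-dimensional real normed vector space,
`C ⊆ E` a nonempty closed convex subset, and `T : C → C` a nonexpansive map with a
fixed point.  Then the fixed-point set of `T` is a nonexpansive retract of `C`: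
there is a nonexpansive map `ρ : C → C` whose image is exactly `Fix(T)` and which
fixes every point of `Fix(T)`. -/
theorem fixedPointSet_nonexpansive_retract
    {E : Type*} [NormedAddCommGroup E] [NormedSpace ℝ E] [FiniteDimensional ℝ E]
    (C : Set E) (hCne : C.Nonempty) (hCclosed : IsClosed C) (hCconv : Convex ℝ C)
    (T : E → E) (hTC : Set.MapsTo T C C)
    (hTne : ∀ x ∈ C, ∀ y ∈ C, ‖T x - T y‖ ≤ ‖x - y‖)
    (hfix : ∃ x ∈ C, T x = x) :
    ∃ ρ : E → E, Set.MapsTo ρ C C ∧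
      (∀ x ∈ C, ∀ y ∈ C, ‖ρ x - ρ y‖ ≤ ‖x - y‖) ∧
      ρ '' C = {x ∈ C | T x = x} ∧
      ∀ x ∈ C, T x = x → ρ x = x := by
  obtain ⟨p, hpC, hp⟩ := hfix
  haveI : Nonempty E := ⟨p⟩
  set S : E → E := fun y => (2⁻¹ : ℝ) • (y + T y) with hSdef
  have hSmem : ∀ y ∈ C, S y ∈ C := by
    intro y hy
    have h := hCconv hy (hTC hy) (by norm_num : (0:ℝ) ≤ 2⁻¹)
      (by norm_num : (0:ℝ) ≤ 2⁻¹) (by norm_num)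
    simpa [hSdef, smul_add] using h
  have hSne : ∀ y ∈ C, ∀ w ∈ C, ‖S y - S w‖ ≤ ‖y - w‖ := by
    intro y hy w hw
    have hid : S y - S w = (2⁻¹:ℝ) • ((y - w) + (T y - T w)) := by
      simp only [hSdef]; module
    have h1 : ‖T y - T w‖ ≤ ‖y - w‖ := hTne y hy w hw
    calc ‖S y - S w‖ = 2⁻¹ * ‖(y - w) + (T y - T w)‖ := by
          rw [hid, norm_smul]; norm_num
    _ ≤ 2⁻¹ * (‖y - w‖ + ‖T y - T w‖) := by
          have := norm_add_le (y - w) (T y - T w)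
          linarith
    _ ≤ ‖y - w‖ := by linarith
  have hitermem : ∀ y ∈ C, ∀ n, S^[n] y ∈ C := by
    intro y hy n
    induction n with
    | zero => exact hy
    | succ n ih => rw [Function.iterate_succ_apply']; exact hSmem _ ih
  have hiterne : ∀ y ∈ C, ∀ w ∈ C, ∀ n, ‖S^[n] y - S^[n] w‖ ≤ ‖y - w‖ := by
    intro y hy w hw n
    induction n with
    | zero => exact le_refl _
    | succ n ih =>
      rw [Function.iterate_succ_apply', Function.iterate_succ_apply']
      exact le_trans (hSne _ (hitermem y hy n) _ (hitermem w hw n)) ih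
  set ρ : E → E := fun y => limUnder atTop (fun n => S^[n] y) with hρdef
  have hρ : ∀ x ∈ C, ρ x ∈ C ∧ T (ρ x) = ρ x ∧
      Tendsto (fun n => S^[n] x) atTop (𝓝 (ρ x)) := by
    intro x hx
    obtain ⟨z, hzC, hTz, hzt⟩ :=
      bruck_key C hCclosed hCconv T hTC hTne p hpC hp x hx
    have hz : ρ x = z := hzt.limUnder_eq
    rw [hz]
    exact ⟨hzC, hTz, hzt⟩
  have hfixρ : ∀ x ∈ C, T x = x → ρ x = x := by
    intro x hx hTx
    have hSx : S x = x := by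
      simp only [hSdef, hTx]
      module
    have hiter : ∀ n, S^[n] x = x := fun n => Function.iterate_fixed hSx n
    show limUnder atTop (fun n => S^[n] x) = x
    simp only [hiter]
    exact Filter.Tendsto.limUnder_eq tendsto_const_nhds
  refine ⟨ρ, fun x hx => (hρ x hx).1, ?_, ?_, hfixρ⟩
  · intro x hx y hy
    have htx := (hρ x hx).2.2
    have hty := (hρ y hy).2.2
    have hnorm : Tendsto (fun n => ‖S^[n] x - S^[n] y‖) atTop (𝓝 ‖ρ x - ρ y‖) :=
      (htx.sub hty).norm
    exact le_of_tendsto' hnorm (hiterne x hx y hy)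
  · ext y
    constructor
    · rintro ⟨x, hx, rfl⟩
      exact ⟨(hρ x hx).1, (hρ x hx).2.1⟩
    · rintro ⟨hyC, hTy⟩
      exact ⟨y, hyC, hfixρ y hyC hTy⟩
end

section
/- Let T : ℝⁿ → ℝⁿ be monotone and additively homogeneous, and suppose there exist u ∈ ℝⁿ and λ ∈ ℝ with T(u) = λ𝟏 + u. Let 𝓔(T) := { v ∈ ℝⁿ : T(v) = λ𝟏 + v } be the set of eigenvectors of T. Then 𝓔(T) is a retract of ℝⁿ by a map that is nonexpansive for the sup-norm; in particular, 𝓔(T) is path-connected. -/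
/-- let `T : ℝⁿ → ℝⁿ` be monotone and additively homogeneous, with an
eigenpair `T(u) = λ𝟏 + u`.  Then the set `𝓔(T)` of eigenvectors of `T` is a retract of
`ℝⁿ` by a sup-norm nonexpansive map; in particular it is path-connected.
(Here `Fin n → ℝ` carries the sup norm.) -/
theorem eigenspace_nonexpansive_retract_and_pathConnected
    {n : ℕ} (T : (Fin n → ℝ) → (Fin n → ℝ))
    (hmon : Monotone T)
    (hah : ∀ (x : Fin n → ℝ) (c : ℝ), T (x + c • (1 : Fin n → ℝ)) = T x + c • (1 : Fin n → ℝ))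
    (u : Fin n → ℝ) (lam : ℝ) (hu : T u = lam • (1 : Fin n → ℝ) + u) :
    (∃ ρ : (Fin n → ℝ) → (Fin n → ℝ),
      (∀ x y : Fin n → ℝ, ‖ρ x - ρ y‖ ≤ ‖x - y‖) ∧
      Set.range ρ = {v : Fin n → ℝ | T v = lam • (1 : Fin n → ℝ) + v} ∧
      ∀ v : Fin n → ℝ, T v = lam • (1 : Fin n → ℝ) + v → ρ v = v) ∧
    IsPathConnected {v : Fin n → ℝ | T v = lam • (1 : Fin n → ℝ) + v} := by
  classical
  -- the normalized map
  set S : (Fin n → ℝ) → (Fin n → ℝ) := fun x => T x - lam • (1 : Fin n → ℝ) with hSdef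
  have hSv : ∀ v : Fin n → ℝ, T v = lam • (1 : Fin n → ℝ) + v ↔ S v = v := by
    intro v
    constructor
    · intro h; simp [hSdef, h]
    · intro h
      have : T v - lam • (1 : Fin n → ℝ) = v := h
      rw [sub_eq_iff_eq_add] at this
      rw [this]; abel
  have hS_mono : Monotone S := fun x y h => sub_le_sub_right (hmon h) _
  have hS_hom : ∀ (x : Fin n → ℝ) (c : ℝ), S (x + c • (1 : Fin n → ℝ)) = S x + c • (1 : Fin n → ℝ) := by
    intro x c
    simp only [hSdef, hah]
    abel
  have hSu : S u = u := (hSv u).mp hu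
  -- basic order bound
  have hle : ∀ x y : Fin n → ℝ, x ≤ y + ‖x - y‖ • (1 : Fin n → ℝ) := by
    intro x y i
    have h1 : ‖(x - y) i‖ ≤ ‖x - y‖ := norm_le_pi_norm (x - y) i
    have h2 : x i - y i ≤ ‖x - y‖ := le_trans (le_abs_self _) h1
    simp only [Pi.add_apply, Pi.smul_apply, Pi.one_apply, smul_eq_mul, mul_one]
    linarith
  have hS_dom : ∀ x y : Fin n → ℝ, S x ≤ S y + ‖x - y‖ • (1 : Fin n → ℝ) := by
    intro x y
    calc S x ≤ S (y + ‖x - y‖ • (1 : Fin n → ℝ)) := hS_mono (hle x y)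
      _ = S y + ‖x - y‖ • (1 : Fin n → ℝ) := hS_hom y _
  have hS_comp : ∀ x y : Fin n → ℝ, ∀ i, S x i ≤ S y i + ‖x - y‖ := by
    intro x y i
    have := hS_dom x y i
    simpa using this
  have hS_nonexp : ∀ x y : Fin n → ℝ, ‖S x - S y‖ ≤ ‖x - y‖ := by
    intro x y
    rw [pi_norm_le_iff_of_nonneg (norm_nonneg _)]
    intro i
    rw [Real.norm_eq_abs, abs_le]
    constructor
    · have := hS_comp y x i
      rw [show ‖y - x‖ = ‖x - y‖ from norm_sub_rev y x] at this
      simp only [Pi.sub_apply]; linarith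
    · have := hS_comp x y i
      simp only [Pi.sub_apply]; linarith
  have hS_cont : Continuous S := by
    have : LipschitzWith 1 S := by
      refine LipschitzWith.of_dist_le_mul fun x y => ?_
      simpa [dist_eq_norm] using hS_nonexp x y
    exact this.continuous
  -- iterates
  have hit_nonexp : ∀ (k : ℕ) (x y : Fin n → ℝ), ‖S^[k] x - S^[k] y‖ ≤ ‖x - y‖ := by
    intro k
    induction k with
    | zero => intro x y; simp
    | succ k ih =>
      intro x y
      rw [Function.iterate_succ_apply', Function.iterate_succ_apply']
      exact le_trans (hS_nonexp _ _) (ih x y)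
  have hit_fix : ∀ (k : ℕ) (v : Fin n → ℝ), S v = v → S^[k] v = v := by
    intro k v hv
    induction k with
    | zero => simp
    | succ k ih => rw [Function.iterate_succ_apply', ih, hv]
  have hfixline : ∀ c : ℝ, S (u - c • (1 : Fin n → ℝ)) = u - c • (1 : Fin n → ℝ) := by
    intro c
    have := hS_hom u (-c)
    rw [hSu] at this
    simpa [neg_smul, sub_eq_add_neg] using this
  -- the eigenspace as a subtype
  have EneS : Nonempty {v : Fin n → ℝ // S v = v} := ⟨⟨u, hSu⟩⟩
  -- the first nonexpansive map, into the sub-eigenspace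
  set ρ : (Fin n → ℝ) → (Fin n → ℝ) :=
    fun x i => ⨅ v : {v : Fin n → ℝ // S v = v}, (v.1 i + ‖x - v.1‖) with hρdef
  have hkey : ∀ (x : Fin n → ℝ) (i : Fin n) (v : {v : Fin n → ℝ // S v = v}),
      x i ≤ v.1 i + ‖x - v.1‖ := by
    intro x i v
    have h1 : ‖(x - v.1) i‖ ≤ ‖x - v.1‖ := norm_le_pi_norm _ i
    have h2 : x i - v.1 i ≤ ‖x - v.1‖ := le_trans (le_abs_self _) h1
    linarith
  have hbdd : ∀ (x : Fin n → ℝ) (i : Fin n),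
      BddBelow (Set.range fun v : {v : Fin n → ℝ // S v = v} => v.1 i + ‖x - v.1‖) := by
    intro x i
    exact ⟨x i, by rintro _ ⟨v, rfl⟩; exact hkey x i v⟩
  have hρ_ub : ∀ (x : Fin n → ℝ) (v : {v : Fin n → ℝ // S v = v}) (i : Fin n),
      ρ x i ≤ v.1 i + ‖x - v.1‖ := by
    intro x v i
    exact ciInf_le (hbdd x i) v
  have hρ_lb : ∀ (x : Fin n → ℝ) (i : Fin n), x i ≤ ρ x i := by
    intro x i
    exact le_ciInf (hkey x i)
  have hρ_fix : ∀ v : Fin n → ℝ, S v = v → ρ v = v := by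
    intro v hv
    funext i
    refine le_antisymm ?_ (hρ_lb v i)
    have := hρ_ub v ⟨v, hv⟩ i
    simpa using this
  have hρ_comp : ∀ x y : Fin n → ℝ, ∀ i, ρ x i ≤ ρ y i + ‖x - y‖ := by
    intro x y i
    rw [← sub_le_iff_le_add]
    refine le_ciInf fun v => ?_
    have h1 : ρ x i ≤ v.1 i + ‖x - v.1‖ := hρ_ub x v i
    have h2 : ‖x - v.1‖ ≤ ‖x - y‖ + ‖y - v.1‖ := by
      calc ‖x - v.1‖ = ‖(x - y) + (y - v.1)‖ := by abel_nf
        _ ≤ ‖x - y‖ + ‖y - v.1‖ := norm_add_le _ _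
    linarith
  have hρ_nonexp : ∀ x y : Fin n → ℝ, ‖ρ x - ρ y‖ ≤ ‖x - y‖ := by
    intro x y
    rw [pi_norm_le_iff_of_nonneg (norm_nonneg _)]
    intro i
    rw [Real.norm_eq_abs, abs_le]
    constructor
    · have := hρ_comp y x i
      rw [show ‖y - x‖ = ‖x - y‖ from norm_sub_rev y x] at this
      simp only [Pi.sub_apply]; linarith
    · have := hρ_comp x y i
      simp only [Pi.sub_apply]; linarith
  have hSρ : ∀ x : Fin n → ℝ, S (ρ x) ≤ ρ x := by
    intro x i
    refine le_ciInf fun v => ?_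
    have h1 : ρ x ≤ v.1 + ‖x - v.1‖ • (1 : Fin n → ℝ) := by
      intro j
      have := hρ_ub x v j
      simpa using this
    have h2 : S (ρ x) ≤ S v.1 + ‖x - v.1‖ • (1 : Fin n → ℝ) := by
      calc S (ρ x) ≤ S (v.1 + ‖x - v.1‖ • (1 : Fin n → ℝ)) := hS_mono h1
        _ = S v.1 + ‖x - v.1‖ • (1 : Fin n → ℝ) := hS_hom _ _
    have := h2 i
    rw [v.2] at this
    simpa using this
  -- the iterate sequence
  set a : (Fin n → ℝ) → ℕ → (Fin n → ℝ) := fun x k => S^[k] (ρ x) with hadef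
  have ha_succ : ∀ (x : Fin n → ℝ) (k : ℕ), a x (k + 1) = S (a x k) := by
    intro x k
    simp [hadef, Function.iterate_succ_apply']
  have ha_anti : ∀ (x : Fin n → ℝ) (k : ℕ), a x (k + 1) ≤ a x k := by
    intro x k
    induction k with
    | zero =>
      have : a x 1 = S (ρ x) := by simp [hadef]
      rw [this]
      exact hSρ x
    | succ k ih =>
      calc a x (k + 2) = S (a x (k + 1)) := ha_succ x (k + 1)
        _ ≤ S (a x k) := hS_mono ih
        _ = a x (k + 1) := (ha_succ x k).symm
  have ha_anti' : ∀ (x : Fin n → ℝ) (i : Fin n), Antitone fun k => a x k i := by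
    intro x i
    exact antitone_nat_of_succ_le fun k => ha_anti x k i
  have ha_lb : ∀ (x : Fin n → ℝ) (k : ℕ),
      u - ‖ρ x - u‖ • (1 : Fin n → ℝ) ≤ a x k := by
    intro x k
    have hlow : u - ‖ρ x - u‖ • (1 : Fin n → ℝ) ≤ ρ x := by
      intro i
      have h1 : ‖(ρ x - u) i‖ ≤ ‖ρ x - u‖ := norm_le_pi_norm _ i
      have h2 : u i - ρ x i ≤ ‖ρ x - u‖ := by
        have := neg_le_of_abs_le h1
        simp only [Pi.sub_apply, Real.norm_eq_abs] at h1 ⊢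
        have := neg_abs_le (ρ x i - u i)
        nlinarith [le_abs_self (ρ x i - u i), neg_abs_le (ρ x i - u i), h1]
      simp only [Pi.sub_apply, Pi.smul_apply, Pi.one_apply, smul_eq_mul, mul_one]
      linarith
    calc u - ‖ρ x - u‖ • (1 : Fin n → ℝ)
        = S^[k] (u - ‖ρ x - u‖ • (1 : Fin n → ℝ)) := (hit_fix k _ (hfixline _)).symm
      _ ≤ S^[k] (ρ x) := (hS_mono.iterate k) hlow
  -- the retraction: pointwise limit (infimum) of the iterates
  set r : (Fin n → ℝ) → (Fin n → ℝ) := fun x i => ⨅ k : ℕ, a x k i with hrdef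
  have htend : ∀ x : Fin n → ℝ, Filter.Tendsto (fun k => a x k) Filter.atTop (nhds (r x)) := by
    intro x
    rw [tendsto_pi_nhds]
    intro i
    refine tendsto_atTop_ciInf (ha_anti' x i) ?_
    exact ⟨u i - ‖ρ x - u‖, by
      rintro _ ⟨k, rfl⟩
      have := ha_lb x k i
      simpa using this⟩
  have hr_fixpt : ∀ x : Fin n → ℝ, S (r x) = r x := by
    intro x
    have h1 : Filter.Tendsto (fun k => a x (k + 1)) Filter.atTop (nhds (r x)) :=
      (htend x).comp (Filter.tendsto_add_atTop_nat 1)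
    have h2 : Filter.Tendsto (fun k => S (a x k)) Filter.atTop (nhds (S (r x))) :=
      (hS_cont.tendsto _).comp (htend x)
    have h3 : (fun k => a x (k + 1)) = fun k => S (a x k) := by
      funext k; exact ha_succ x k
    rw [h3] at h1
    exact tendsto_nhds_unique h2 h1
  have hr_fix : ∀ v : Fin n → ℝ, S v = v → r v = v := by
    intro v hv
    funext i
    have h1 : ∀ k, a v k = v := by
      intro k
      simp only [hadef]
      rw [hρ_fix v hv]
      exact hit_fix k v hv
    simp only [hrdef]
    simp [h1]
  have hr_nonexp : ∀ x y : Fin n → ℝ, ‖r x - r y‖ ≤ ‖x - y‖ := by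
    intro x y
    have h1 : Filter.Tendsto (fun k => ‖a x k - a y k‖) Filter.atTop (nhds ‖r x - r y‖) :=
      ((htend x).sub (htend y)).norm
    refine le_of_tendsto h1 (Filter.Eventually.of_forall fun k => ?_)
    calc ‖a x k - a y k‖ ≤ ‖ρ x - ρ y‖ := hit_nonexp k _ _
      _ ≤ ‖x - y‖ := hρ_nonexp x y
  have hr_cont : Continuous r := by
    have : LipschitzWith 1 r := by
      refine LipschitzWith.of_dist_le_mul fun x y => ?_
      simpa [dist_eq_norm] using hr_nonexp x y
    exact this.continuous
  have hrange : Set.range r = {v : Fin n → ℝ | T v = lam • (1 : Fin n → ℝ) + v} := by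
    ext v
    constructor
    · rintro ⟨x, rfl⟩
      exact (hSv _).mpr (hr_fixpt x)
    · intro hv
      exact ⟨v, hr_fix v ((hSv v).mp hv)⟩
  refine ⟨⟨r, hr_nonexp, hrange, fun v hv => hr_fix v ((hSv v).mp hv)⟩, ?_⟩
  have huniv : IsPathConnected (Set.univ : Set (Fin n → ℝ)) :=
    (convex_univ : Convex ℝ (Set.univ : Set (Fin n → ℝ))).isPathConnected ⟨0, trivial⟩
  have himg := huniv.image hr_cont
  rwa [Set.image_univ, hrange] at himg
end

section
/- Let M be an n×n matrix over ℝ_max = ℝ ∪ {−∞} with no row identically equal to −∞. Then there exists u ∈ ℝ_max^n with at least one finite entry such that max_{1≤j≤n} (M_{ij} + u_j) = ρ(M) + u_i for every i = 1,…,n, where ρ(M) is the maximal circuit mean of M. -/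
/-- The set of average weights of elementary circuits of the precedence graph of a
max-plus matrix `M` (entries in `ℝ ∪ {-∞} = WithBot ℝ`).  An elementary circuit is
given by an injective map `c : Fin (k+1) → Fin n` all of whose cyclically consecutive
arcs are present in `M`. -/
def circuitMeans {n : ℕ} (M : Fin n → Fin n → WithBot ℝ) : Set ℝ :=
  {m | ∃ (k : ℕ) (c : Fin (k + 1) → Fin n), Function.Injective c ∧
    (∀ l, M (c l) (c (l + 1)) ≠ ⊥) ∧
    m = (∑ l, WithBot.unbotD 0 (M (c l) (c (l + 1)))) / (k + 1)}

/-- The maximal circuit mean `ρ(M)` of a max-plus matrix. -/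
noncomputable def maxCircuitMean {n : ℕ} (M : Fin n → Fin n → WithBot ℝ) : ℝ :=
  sSup (circuitMeans M)

namespace TropAux


lemma coe_unbot'_of_ne {x : WithBot ℝ} (h : x ≠ ⊥) :
    ((WithBot.unbotD 0 x : ℝ) : WithBot ℝ) = x := by
  cases x with
  | bot => exact absurd rfl h
  | coe a => rfl

lemma sup_add_right (a b c : WithBot ℝ) : (a ⊔ b) + c = (a + c) ⊔ (b + c) := by
  rcases le_total a b with h | h
  · rw [sup_eq_right.2 h, sup_eq_right.2 (add_le_add_left h c)]
  · rw [sup_eq_left.2 h, sup_eq_left.2 (add_le_add_left h c)]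

lemma sup_add_left (a b c : WithBot ℝ) : c + (a ⊔ b) = (c + a) ⊔ (c + b) := by
  rw [add_comm c, add_comm c, add_comm c, sup_add_right]

lemma finsetSup_add {β : Type*} (s : Finset β) (f : β → WithBot ℝ) (a : WithBot ℝ) :
    s.sup f + a = s.sup fun b => f b + a := by
  induction s using Finset.cons_induction with
  | empty => simp
  | cons x s hx ih => rw [Finset.sup_cons, Finset.sup_cons, sup_add_right, ih]

lemma add_finsetSup {β : Type*} (a : WithBot ℝ) (s : Finset β) (f : β → WithBot ℝ) :
    a + s.sup f = s.sup fun b => a + f b := by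
  induction s using Finset.cons_induction with
  | empty => simp
  | cons x s hx ih => rw [Finset.sup_cons, Finset.sup_cons, sup_add_left, ih]

variable {n : ℕ}

/-- `tropW M i k j` : max weight of walks of length `k` from `j` to `i`. -/
noncomputable def tropW (M : Fin n → Fin n → WithBot ℝ) (i : Fin n) :
    ℕ → Fin n → WithBot ℝ
  | 0, j => if j = i then 0 else ⊥
  | k+1, j => Finset.univ.sup fun l => M j l + tropW M i k l

def IsMWalk (M : Fin n → Fin n → WithBot ℝ) (k : ℕ) (p : ℕ → Fin n) : Prop :=
  ∀ l < k, M (p l) (p (l+1)) ≠ ⊥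

noncomputable def mwgt (M : Fin n → Fin n → WithBot ℝ) (k : ℕ) (p : ℕ → Fin n) : ℝ :=
  ∑ l ∈ Finset.range k, WithBot.unbotD 0 (M (p l) (p (l+1)))

lemma walk_le_tropW (M : Fin n → Fin n → WithBot ℝ) (i : Fin n) :
    ∀ (k : ℕ) (p : ℕ → Fin n), IsMWalk M k p → p k = i →
      ((mwgt M k p : ℝ) : WithBot ℝ) ≤ tropW M i k (p 0)
  | 0, p, _, hpk => by simp [mwgt, tropW, hpk]
  | k+1, p, hw, hpk => by
    have hq : IsMWalk M k (fun l => p (l+1)) := fun l hl => hw (l+1) (by omega)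
    have ih := walk_le_tropW M i k (fun l => p (l+1)) hq hpk
    have harc : M (p 0) (p 1) ≠ ⊥ := hw 0 (by omega)
    have hsplit : mwgt M (k+1) p
        = WithBot.unbotD 0 (M (p 0) (p 1)) + mwgt M k (fun l => p (l+1)) := by
      rw [mwgt, Finset.sum_range_succ']
      rw [add_comm]
      rfl
    calc ((mwgt M (k+1) p : ℝ) : WithBot ℝ)
        = (WithBot.unbotD 0 (M (p 0) (p 1)) : ℝ) + ((mwgt M k (fun l => p (l+1)) : ℝ) : WithBot ℝ) := by
          rw [hsplit, WithBot.coe_add]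
      _ = M (p 0) (p 1) + ((mwgt M k (fun l => p (l+1)) : ℝ) : WithBot ℝ) := by
          rw [coe_unbot'_of_ne harc]
      _ ≤ M (p 0) (p 1) + tropW M i k (p 1) := add_le_add_right ih _
      _ ≤ tropW M i (k+1) (p 0) := by
          show M (p 0) (p 1) + tropW M i k (p 1)
            ≤ Finset.univ.sup fun l => M (p 0) l + tropW M i k l
          exact Finset.le_sup (f := fun l => M (p 0) l + tropW M i k l)
            (Finset.mem_univ (p 1))

lemma tropW_exists_walk (M : Fin n → Fin n → WithBot ℝ) (i : Fin n) :
    ∀ (k : ℕ) (j : Fin n), tropW M i k j ≠ ⊥ →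
      ∃ p, IsMWalk M k p ∧ p 0 = j ∧ p k = i ∧
        tropW M i k j = ((mwgt M k p : ℝ) : WithBot ℝ)
  | 0, j, hb => by
    have hji : j = i := by
      by_contra h
      exact hb (by simp [tropW, h])
    exact ⟨fun _ => i, fun l hl => absurd hl (by omega), hji.symm, rfl, by simp [tropW, hji, mwgt]⟩
  | k+1, j, hb => by
    obtain ⟨l0, -, hl0⟩ := Finset.exists_mem_eq_sup Finset.univ
      ⟨j, Finset.mem_univ j⟩ (fun l => M j l + tropW M i k l)
    have hval : tropW M i (k+1) j = M j l0 + tropW M i k l0 := hl0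
    have hMne : M j l0 ≠ ⊥ ∧ tropW M i k l0 ≠ ⊥ := by
      rw [hval] at hb
      constructor
      · exact fun h => hb (WithBot.add_eq_bot.2 (Or.inl h))
      · exact fun h => hb (WithBot.add_eq_bot.2 (Or.inr h))
    obtain ⟨q, hqw, hq0, hqk, hqval⟩ := tropW_exists_walk M i k l0 hMne.2
    refine ⟨fun l => Nat.casesOn l j (fun m => q m), ?_, rfl, hqk, ?_⟩
    · intro l hl
      cases l with
      | zero => simpa [hq0] using hMne.1
      | succ m => exact hqw m (by omega)
    · rw [hval, hqval, ← coe_unbot'_of_ne hMne.1, ← WithBot.coe_add]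
      congr 1
      symm
      rw [mwgt, Finset.sum_range_succ']
      show (∑ l ∈ Finset.range k, WithBot.unbotD 0 (M (q l) (q (l+1)))) + WithBot.unbotD 0 (M j (q 0))
        = WithBot.unbotD 0 (M j l0) + mwgt M k q
      rw [hq0, add_comm, mwgt]



lemma firstRepeat (hn : 0 < n) (v : ℕ → Fin n) :
    ∃ a b, a < b ∧ b ≤ n ∧ v a = v b ∧
      ∀ x y, a ≤ x → x < y → y < b → v x ≠ v y := by
  classical
  have hex : ∃ q, ∃ p, p < q ∧ v p = v q := by
    have hni : ¬ Function.Injective (fun l : Fin (n+1) => v l.1) := by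
      intro hinj
      have := Fintype.card_le_of_injective _ hinj
      simp at this
    rw [Function.not_injective_iff] at hni
    obtain ⟨x, y, hxy, hne⟩ := hni
    rcases lt_or_gt_of_ne (fun h : x.1 = y.1 => hne (Fin.ext h)) with h | h
    · exact ⟨y.1, x.1, h, hxy⟩
    · exact ⟨x.1, y.1, h, hxy.symm⟩
  set b := Nat.find hex with hb
  obtain ⟨a, hab, hvab⟩ := Nat.find_spec hex
  have hbn : b ≤ n := by
    by_contra hgt
    push_neg at hgt
    -- v restricted to Fin (b) ⊆ first b values has no repeat among 0..b-1, but b > n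
    have hinj : Function.Injective (fun l : Fin b => v l.1) := by
      intro x y hxy
      rcases lt_trichotomy x.1 y.1 with h | h | h
      · exact absurd ⟨x.1, h, hxy⟩ (Nat.find_min hex y.2)
      · exact Fin.ext h
      · exact absurd ⟨y.1, h, hxy.symm⟩ (Nat.find_min hex x.2)
    have := Fintype.card_le_of_injective _ hinj
    simp at this
    omega
  refine ⟨a, b, hab, hbn, hvab, ?_⟩
  intro x y hax hxy hyb hvxy
  exact Nat.find_min hex hyb ⟨x, hxy, hvxy⟩

lemma seg_mem_circuitMeans (M : Fin n → Fin n → WithBot ℝ) (v : ℕ → Fin n)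
    (a b : ℕ) (hab : a < b) (hbn : b ≤ n) (hvab : v a = v b)
    (hinj : ∀ x y, a ≤ x → x < y → y < b → v x ≠ v y)
    (harc : ∀ l < b, M (v l) (v (l+1)) ≠ ⊥) :
    (∑ l ∈ Finset.Ico a b, WithBot.unbotD 0 (M (v l) (v (l+1)))) / ((b - a : ℕ) : ℝ)
      ∈ circuitMeans M := by
  set k : ℕ := b - a - 1 with hk
  have hk1 : k + 1 = b - a := by omega
  have hak : a + k + 1 = b := by omega
  set c : Fin (k+1) → Fin n := fun l => v (a + l.1) with hc
  have hcinj : Function.Injective c := by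
    intro l₁ l₂ h
    by_contra hne
    rcases lt_trichotomy l₁.1 l₂.1 with hlt | heq | hgt
    · exact hinj (a + l₁.1) (a + l₂.1) (by omega) (by omega) (by omega) h
    · exact hne (Fin.ext heq)
    · exact hinj (a + l₂.1) (a + l₁.1) (by omega) (by omega) (by omega) h.symm
  have hkey : ∀ l : Fin (k+1), c (l + 1) = v (a + l.1 + 1) := by
    intro l
    by_cases hl : l.1 = k
    · have h1 : l + 1 = 0 := by
        apply Fin.ext
        rw [Fin.val_add_one]
        simp [Fin.ext_iff, Fin.last, hl]
      rw [h1]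
      show v (a + 0) = v (a + l.1 + 1)
      rw [hl, hak]
      simpa using hvab
    · have h1 : (l + 1).1 = l.1 + 1 := by
        rw [Fin.val_add_one]
        rw [if_neg (fun h => hl (by rw [h, Fin.val_last]))]
      show v (a + (l+1).1) = v (a + l.1 + 1)
      rw [h1, ← Nat.add_assoc]
  have hcarc : ∀ l : Fin (k+1), M (c l) (c (l + 1)) ≠ ⊥ := by
    intro l
    rw [hkey l]
    exact harc (a + l.1) (by omega)
  refine ⟨k, c, hcinj, hcarc, ?_⟩
  have hsum : (∑ l : Fin (k+1), WithBot.unbotD 0 (M (c l) (c (l + 1))))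
      = ∑ l ∈ Finset.Ico a b, WithBot.unbotD 0 (M (v l) (v (l+1))) := by
    have h1 : ∀ l : Fin (k+1), WithBot.unbotD 0 (M (c l) (c (l + 1)))
        = WithBot.unbotD 0 (M (v (a + l.1)) (v (a + l.1 + 1))) := by
      intro l; rw [hkey l]
    rw [Finset.sum_congr rfl (fun l _ => h1 l)]
    rw [Fin.sum_univ_eq_sum_range (fun l => WithBot.unbotD 0 (M (v (a + l)) (v (a + l + 1))))]
    rw [Finset.sum_Ico_eq_sum_range]
    rw [← hk1]
  rw [hsum]
  congr 1
  rw [← hk1]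
  push_cast
  ring

lemma circuitMeans_nonempty (hn : 0 < n) (M : Fin n → Fin n → WithBot ℝ)
    (hM : ∀ i, ∃ j, M i j ≠ ⊥) : (circuitMeans M).Nonempty := by
  classical
  let v : ℕ → Fin n := fun l => Nat.rec ⟨0, hn⟩ (fun _ prev => (hM prev).choose) l
  have hv : ∀ l, M (v l) (v (l+1)) ≠ ⊥ := fun l => (hM (v l)).choose_spec
  obtain ⟨a, b, hab, hbn, hvab, hinj⟩ := firstRepeat hn v
  exact ⟨_, seg_mem_circuitMeans M v a b hab hbn hvab hinj (fun l _ => hv l)⟩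

lemma circuitMeans_finite (M : Fin n → Fin n → WithBot ℝ) :
    (circuitMeans M).Finite := by
  classical
  have hsub : circuitMeans M ⊆ Set.range
      (fun x : Σ k : Fin n, (Fin (k.1+1) → Fin n) =>
        (∑ l, WithBot.unbotD 0 (M (x.2 l) (x.2 (l+1)))) / ((x.1.1 : ℝ) + 1)) := by
    rintro m ⟨k, c, hcinj, -, rfl⟩
    have hk : k + 1 ≤ n := by simpa using Fintype.card_le_of_injective c hcinj
    exact ⟨⟨⟨k, by omega⟩, c⟩, rfl⟩
  exact (Set.finite_range _).subset hsub


lemma tropW_succ (M : Fin n → Fin n → WithBot ℝ) (i : Fin n) (k : ℕ) (j : Fin n) :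
    tropW M i (k+1) j = Finset.univ.sup fun l => M j l + tropW M i k l := by
  rw [tropW]

lemma removal (hn : 0 < n) (M : Fin n → Fin n → WithBot ℝ) (i : Fin n) (ρ : ℝ)
    (hub : ∀ m ∈ circuitMeans M, m ≤ ρ) (j : Fin n) :
    tropW M i n j + ((-(n * ρ) : ℝ) : WithBot ℝ) ≤
      (Finset.range n).sup fun k => tropW M i k j + ((-(k * ρ) : ℝ) : WithBot ℝ) := by
  by_cases hbot : tropW M i n j = ⊥
  · simp [hbot]
  obtain ⟨p, hw, hp0, hpn, hval⟩ := tropW_exists_walk M i n j hbot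
  obtain ⟨a, b, hab, hbn, hvab, hinj⟩ := firstRepeat hn p
  set f : ℕ → ℝ := fun l => WithBot.unbotD 0 (M (p l) (p (l+1))) with hf
  set S : ℝ := ∑ l ∈ Finset.Ico a b, f l with hS
  set d : ℕ := b - a with hd
  have hd1 : 1 ≤ d := by omega
  have hadb : a + d = b := by omega
  have hdn : d ≤ n := by omega
  -- circuit bound : S ≤ d * ρ
  have hSd : S ≤ d * ρ := by
    have hmem := seg_mem_circuitMeans M p a b hab hbn hvab hinj
      (fun l hl => hw l (by omega))
    have hle := hub _ hmem
    rw [div_le_iff₀ (by exact_mod_cast (by omega : 0 < d))] at hle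
    calc S ≤ ρ * (d : ℝ) := hle
      _ = d * ρ := mul_comm _ _
  -- shortened walk
  set k2 : ℕ := n - d with hk2
  have hk2d : k2 + d = n := by omega
  have hak2 : a ≤ k2 := by omega
  have hk2n : k2 < n := by omega
  set p2 : ℕ → Fin n := fun l => if l < a then p l else p (l + d) with hp2
  have hp2low : ∀ l, l ≤ a → p2 l = p l := by
    intro l hl
    by_cases h : l < a
    · simp [hp2, h]
    · have hla : l = a := by omega
      simp only [hp2, if_neg h]
      rw [hla, hadb]
      exact hvab.symm
  have hp2high : ∀ l, a ≤ l → p2 l = p (l + d) := by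
    intro l hl
    by_cases h : l < a
    · omega
    · simp [hp2, h]
  have hw2 : IsMWalk M k2 p2 := by
    intro l hl
    by_cases h : l + 1 ≤ a
    · rw [hp2low l (by omega), hp2low (l+1) h]
      exact hw l (by omega)
    · have hla : a ≤ l := by omega
      rw [hp2high l hla, hp2high (l+1) (by omega)]
      have : l + 1 + d = l + d + 1 := by omega
      rw [this]
      exact hw (l + d) (by omega)
  have hp20 : p2 0 = j := by rw [hp2low 0 (by omega), hp0]
  have hp2k2 : p2 k2 = i := by rw [hp2high k2 hak2, hk2d, hpn]
  -- weight of shortened walk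
  have hwgt2 : mwgt M k2 p2 = mwgt M n p - S := by
    have hg1 : ∀ l, l + 1 ≤ a →
        WithBot.unbotD 0 (M (p2 l) (p2 (l+1))) = f l := by
      intro l hl
      rw [hp2low l (by omega), hp2low (l+1) hl]
    have hg2 : ∀ l, a ≤ l →
        WithBot.unbotD 0 (M (p2 l) (p2 (l+1))) = f (l + d) := by
      intro l hl
      rw [hp2high l hl, hp2high (l+1) (by omega), hf]
      have : l + 1 + d = l + d + 1 := by omega
      rw [this]
    have hsplit2 : mwgt M k2 p2
        = ∑ l ∈ Finset.range a, f l + ∑ l ∈ Finset.Ico a k2, f (l + d) := by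
      rw [mwgt, Finset.range_eq_Ico, ← Finset.sum_Ico_consecutive _ (by omega : 0 ≤ a) hak2,
        ← Finset.range_eq_Ico]
      congr 1
      · exact Finset.sum_congr rfl fun l hl => hg1 l (by
          simp only [Finset.mem_range] at hl; omega)
      · exact Finset.sum_congr rfl fun l hl => hg2 l (by
          simp only [Finset.mem_Ico] at hl; exact hl.1)
    have hshift : ∑ l ∈ Finset.Ico a k2, f (l + d) = ∑ l ∈ Finset.Ico b n, f l := by
      rw [Finset.sum_Ico_eq_sum_range, Finset.sum_Ico_eq_sum_range]
      have h1 : k2 - a = n - b := by omega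
      rw [h1]
      exact Finset.sum_congr rfl fun l _ => by
        congr 1
        omega
    have hsplitw : mwgt M n p
        = ∑ l ∈ Finset.range a, f l + S + ∑ l ∈ Finset.Ico b n, f l := by
      rw [mwgt, Finset.range_eq_Ico,
        ← Finset.sum_Ico_consecutive (f := f) (by omega : (0:ℕ) ≤ b) hbn,
        ← Finset.sum_Ico_consecutive (f := f) (by omega : (0:ℕ) ≤ a) (le_of_lt hab),
        ← Finset.range_eq_Ico, hS]
    rw [hsplit2, hshift, hsplitw]
    ring
  -- conclude
  have hle2 : ((mwgt M n p - d * ρ : ℝ) : WithBot ℝ) ≤ tropW M i k2 j := by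
    calc ((mwgt M n p - d * ρ : ℝ) : WithBot ℝ)
        ≤ ((mwgt M n p - S : ℝ) : WithBot ℝ) := by
          exact_mod_cast by linarith
      _ = ((mwgt M k2 p2 : ℝ) : WithBot ℝ) := by rw [hwgt2]
      _ ≤ tropW M i k2 (p2 0) := walk_le_tropW M i k2 p2 hw2 hp2k2
      _ = tropW M i k2 j := by rw [hp20]
  calc tropW M i n j + ((-(n * ρ) : ℝ) : WithBot ℝ)
      = ((mwgt M n p - d * ρ : ℝ) : WithBot ℝ) + ((-(k2 * ρ) : ℝ) : WithBot ℝ) := by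
        rw [hval, ← WithBot.coe_add, ← WithBot.coe_add]
        congr 1
        have : (n : ℝ) = (k2 : ℝ) + (d : ℝ) := by exact_mod_cast hk2d.symm
        rw [this]
        ring
    _ ≤ tropW M i k2 j + ((-(k2 * ρ) : ℝ) : WithBot ℝ) := add_le_add_left hle2 _
    _ ≤ (Finset.range n).sup fun k => tropW M i k j + ((-(k * ρ) : ℝ) : WithBot ℝ) :=
        Finset.le_sup (f := fun k => tropW M i k j + ((-(k * ρ) : ℝ) : WithBot ℝ))
          (Finset.mem_range.2 hk2n)


end TropAux

open TropAux Fin.NatCast Fin.CommRing in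
/-- a max-plus matrix with no row identically `-∞` has a tropical
eigenvector, with at least one finite entry, associated with the tropical eigenvalue
`ρ(M)`: `max_j (M_{ij} + u_j) = ρ(M) + u_i` for every `i`. -/
theorem exists_tropical_eigenvector
    {n : ℕ} (hn : 0 < n) (M : Fin n → Fin n → WithBot ℝ)
    (hM : ∀ i, ∃ j, M i j ≠ ⊥) :
    ∃ u : Fin n → WithBot ℝ, (∃ i, u i ≠ ⊥) ∧
      ∀ i, (Finset.univ.sup'
          (Finset.univ_nonempty_iff.mpr (Fin.pos_iff_nonempty.mp hn))
          fun j => M i j + u j)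
        = (maxCircuitMean M : WithBot ℝ) + u i := by
  classical
  set ρ : ℝ := maxCircuitMean M with hρdef
  have hρmem : ρ ∈ circuitMeans M :=
    Set.Nonempty.csSup_mem (circuitMeans_nonempty hn M hM) (circuitMeans_finite M)
  have hρub : ∀ m ∈ circuitMeans M, m ≤ ρ :=
    fun m hm => le_csSup (circuitMeans_finite M).bddAbove hm
  obtain ⟨k0, c, hcinj, hcarc, hρeq⟩ := hρmem
  set i : Fin n := c 0 with hidef
  have hk0n : k0 + 1 ≤ n := by simpa using Fintype.card_le_of_injective c hcinj
  -- the critical circuit gives a closed walk at i of length k0+1 and weight (k0+1)ρ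
  have hcrit : ((((k0 : ℝ) + 1) * ρ : ℝ) : WithBot ℝ) ≤ tropW M i (k0+1) i := by
    set p0 : ℕ → Fin n := fun l => c ((l : ℕ) : Fin (k0+1)) with hp0def
    have hp00 : p0 0 = i := by simp [hp0def, hidef]
    have hp0k : p0 (k0+1) = i := by
      show c (((k0+1 : ℕ) : Fin (k0+1))) = i
      rw [Fin.natCast_self (k0+1)]
    have hw0 : IsMWalk M (k0+1) p0 := by
      intro l _
      have hcast : ((l+1 : ℕ) : Fin (k0+1)) = ((l : ℕ) : Fin (k0+1)) + 1 := by
        push_cast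
        ring
      show M (c ((l : ℕ) : Fin (k0+1))) (c ((l+1 : ℕ) : Fin (k0+1))) ≠ ⊥
      rw [hcast]
      exact hcarc _
    have hwgt0 : mwgt M (k0+1) p0 = ((k0 : ℝ) + 1) * ρ := by
      have h1 : mwgt M (k0+1) p0 = ∑ l : Fin (k0+1), WithBot.unbotD 0 (M (c l) (c (l+1))) := by
        rw [mwgt,
          ← Fin.sum_univ_eq_sum_range (fun l : ℕ => WithBot.unbotD 0 (M (p0 l) (p0 (l+1))))]
        apply Finset.sum_congr rfl
        intro l _
        have h2 : ((l.1 : ℕ) : Fin (k0+1)) = l := Fin.cast_val_eq_self l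
        have h3 : ((l.1 + 1 : ℕ) : Fin (k0+1)) = l + 1 := by
          push_cast
          rfl
        show WithBot.unbotD 0 (M (c ((l.1 : ℕ) : Fin (k0+1))) (c ((l.1+1 : ℕ) : Fin (k0+1)))) = _
        rw [h2, h3]
      rw [h1]
      rw [eq_div_iff (by positivity : ((k0:ℝ) + 1) ≠ 0)] at hρeq
      linarith [hρeq]
    have := walk_le_tropW M i (k0+1) p0 hw0 hp0k
    rw [hp00, hwgt0] at this
    exact this
  -- the eigenvector
  set u : Fin n → WithBot ℝ := fun j =>
    (Finset.range n).sup fun k => tropW M i k j + ((-(k * ρ) : ℝ) : WithBot ℝ) with hudef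
  refine ⟨u, ⟨i, ?_⟩, ?_⟩
  · -- u i ≠ ⊥
    have hterm : tropW M i 0 i + ((-((0:ℕ) * ρ) : ℝ) : WithBot ℝ) = ((0:ℝ) : WithBot ℝ) := by
      show (if i = i then (0 : WithBot ℝ) else ⊥) + _ = _
      rw [if_pos rfl]
      norm_num
    have hle : ((0:ℝ) : WithBot ℝ) ≤ u i := by
      rw [← hterm]
      exact Finset.le_sup (f := fun k => tropW M i k i + ((-(k * ρ) : ℝ) : WithBot ℝ))
        (Finset.mem_range.2 hn)
    intro hbot
    rw [hbot] at hle
    exact WithBot.coe_ne_bot (le_bot_iff.1 hle)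
  · -- the eigen equation
    intro j
    rw [Finset.sup'_eq_sup]
    have hL : (Finset.univ.sup fun l => M j l + u l)
        = (Finset.range n).sup
            fun k => tropW M i (k+1) j + ((-(k * ρ) : ℝ) : WithBot ℝ) := by
      have h1 : ∀ l : Fin n, M j l + u l
          = (Finset.range n).sup
              fun k => (M j l + tropW M i k l) + ((-(k * ρ) : ℝ) : WithBot ℝ) := by
        intro l
        rw [hudef, add_finsetSup]
        exact Finset.sup_congr rfl fun k _ => by rw [add_assoc]
      rw [Finset.sup_congr rfl fun l _ => h1 l, Finset.sup_comm]
      apply Finset.sup_congr rfl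
      intro k _
      rw [← finsetSup_add, ← tropW_succ]
    have hR : ((ρ : ℝ) : WithBot ℝ) + u j
        = (Finset.range n).sup
            fun k => tropW M i k j + ((ρ - k * ρ : ℝ) : WithBot ℝ) := by
      rw [hudef, add_finsetSup]
      apply Finset.sup_congr rfl
      intro k _
      rw [add_comm ((ρ : ℝ) : WithBot ℝ) _, add_assoc, ← WithBot.coe_add,
        show (-((k:ℝ) * ρ) + ρ : ℝ) = ρ - k * ρ by ring]
    rw [hL, hR]
    apply le_antisymm
    · apply Finset.sup_le
      intro k hk
      have hstep : tropW M i (k+1) j + ((-((k+1 : ℕ) * ρ) : ℝ) : WithBot ℝ)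
          ≤ (Finset.range n).sup
              fun m => tropW M i m j + ((-(m * ρ) : ℝ) : WithBot ℝ) := by
        rcases lt_or_eq_of_le (Nat.succ_le_of_lt (Finset.mem_range.1 hk)) with h | h
        · exact Finset.le_sup (f := fun m => tropW M i m j + ((-(m * ρ) : ℝ) : WithBot ℝ))
            (Finset.mem_range.2 h)
        · have h' : k + 1 = n := h
          rw [h']
          exact removal hn M i ρ hρub j
      calc tropW M i (k+1) j + ((-(k * ρ) : ℝ) : WithBot ℝ)
          = (tropW M i (k+1) j + ((-((k+1 : ℕ) * ρ) : ℝ) : WithBot ℝ))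
              + ((ρ : ℝ) : WithBot ℝ) := by
            have hco : ((-(k * ρ) : ℝ) : WithBot ℝ)
                = ((-((k+1 : ℕ) * ρ) : ℝ) : WithBot ℝ) + ((ρ : ℝ) : WithBot ℝ) := by
              rw [← WithBot.coe_add, WithBot.coe_inj]
              push_cast
              ring
            rw [hco, ← add_assoc]
        _ ≤ ((Finset.range n).sup
              fun m => tropW M i m j + ((-(m * ρ) : ℝ) : WithBot ℝ))
              + ((ρ : ℝ) : WithBot ℝ) := add_le_add_left hstep _
        _ = (Finset.range n).sup
              fun m => tropW M i m j + ((-(m * ρ) : ℝ) : WithBot ℝ)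
                + ((ρ : ℝ) : WithBot ℝ) := finsetSup_add _ _ _
        _ ≤ (Finset.range n).sup
              fun m => tropW M i m j + ((ρ - m * ρ : ℝ) : WithBot ℝ) := by
            apply Finset.sup_le
            intro m hm
            rw [add_assoc, ← WithBot.coe_add,
              show (-((m:ℝ) * ρ) + ρ : ℝ) = ρ - m * ρ by ring]
            exact Finset.le_sup
              (f := fun m => tropW M i m j + ((ρ - m * ρ : ℝ) : WithBot ℝ)) hm
    · apply Finset.sup_le
      intro k hk
      cases k with
      | zero =>
        by_cases hji : j = i
        · have h1 : tropW M i 0 j + ((ρ - (0:ℕ) * ρ : ℝ) : WithBot ℝ)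
              = ((ρ : ℝ) : WithBot ℝ) := by
            rw [hji]
            show (if i = i then (0 : WithBot ℝ) else ⊥) + _ = _
            rw [if_pos rfl]
            norm_num
          rw [h1]
          have h2 : ((ρ : ℝ) : WithBot ℝ)
              ≤ tropW M i (k0+1) j + ((-((k0:ℕ) * ρ) : ℝ) : WithBot ℝ) := by
            rw [hji]
            calc ((ρ : ℝ) : WithBot ℝ)
                = ((((k0:ℝ)+1) * ρ : ℝ) : WithBot ℝ) + ((-((k0:ℕ) * ρ) : ℝ) : WithBot ℝ) := by
                  rw [← WithBot.coe_add]
                  congr 1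
                  push_cast
                  ring
              _ ≤ tropW M i (k0+1) i + ((-((k0:ℕ) * ρ) : ℝ) : WithBot ℝ) :=
                  add_le_add_left hcrit _
          exact le_trans h2
            (Finset.le_sup
              (f := fun m => tropW M i (m+1) j + ((-(m * ρ) : ℝ) : WithBot ℝ))
              (Finset.mem_range.2 (by omega : k0 < n)))
        · have h1 : tropW M i 0 j = ⊥ := by
            show (if j = i then (0 : WithBot ℝ) else ⊥) = ⊥
            rw [if_neg hji]
          rw [h1]
          simp
      | succ m =>
        have hmn : m ∈ Finset.range n := Finset.mem_range.2 (by
          have := Finset.mem_range.1 hk; omega)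
        have hc : ((ρ - (m+1 : ℕ) * ρ : ℝ)) = -((m:ℝ) * ρ) := by
          push_cast
          ring
        rw [hc]
        exact Finset.le_sup
          (f := fun m => tropW M i (m+1) j + ((-(m * ρ) : ℝ) : WithBot ℝ)) hmn
end

section
/- Let T : ℝⁿ → ℝⁿ be monotone and additively homogeneous, and suppose T has an invariant half-line: there exist x, ν ∈ ℝⁿ and t₀ ∈ ℝ such that T(x + tν) = x + (t + 1)ν for every t ≥ t₀. Then for every y ∈ ℝⁿ, lim_{k → ∞} T^k(y)/k = ν; in particular, the mean payoff vector χ(T) := lim_{k → ∞} T^k(0)/k exists and equals ν. -/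
open Filter

/-- if a monotone additively homogeneous operator `T : ℝⁿ → ℝⁿ` has an
invariant half-line, i.e. `T(x + tν) = x + (t+1)ν` for all `t ≥ t₀`, then
`T^k(y)/k → ν` for every `y`; in particular the mean payoff vector
`χ(T) = lim T^k(0)/k` exists and equals `ν`. -/
theorem meanPayoff_of_invariant_halfLine
    {n : ℕ} (T : (Fin n → ℝ) → (Fin n → ℝ))
    (hmon : Monotone T)
    (hah : ∀ (x : Fin n → ℝ) (c : ℝ), T (x + c • (1 : Fin n → ℝ)) = T x + c • (1 : Fin n → ℝ))
    (x ν : Fin n → ℝ) (t₀ : ℝ)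
    (hhalf : ∀ t : ℝ, t₀ ≤ t → T (x + t • ν) = x + (t + 1) • ν) :
    (∀ y : Fin n → ℝ, Tendsto (fun k : ℕ => (k : ℝ)⁻¹ • T^[k] y) atTop (nhds ν)) ∧
    Tendsto (fun k : ℕ => (k : ℝ)⁻¹ • T^[k] 0) atTop (nhds ν) := by
  have key : ∀ y : Fin n → ℝ,
      Tendsto (fun k : ℕ => (k : ℝ)⁻¹ • T^[k] y) atTop (nhds ν) := by
    intro y
    set z : Fin n → ℝ := x + t₀ • ν with hz
    set c : ℝ := ‖y - z‖ with hc
    -- iterates along the half-line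
    have hiter : ∀ k : ℕ, T^[k] z = x + (t₀ + k) • ν := by
      intro k
      induction k with
      | zero => simp [hz]
      | succ k ih =>
        rw [Function.iterate_succ_apply', ih,
          hhalf _ (le_add_of_nonneg_right (Nat.cast_nonneg k))]
        congr 1
        push_cast
        ring
    -- comparison lemma
    have hcomp : ∀ (a b : Fin n → ℝ), a ≤ b + c • (1 : Fin n → ℝ) →
        ∀ k : ℕ, T^[k] a ≤ T^[k] b + c • (1 : Fin n → ℝ) := by
      intro a b hab k
      induction k with
      | zero => simpa using hab
      | succ k ih =>
        rw [Function.iterate_succ_apply', Function.iterate_succ_apply']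
        calc T (T^[k] a) ≤ T (T^[k] b + c • (1 : Fin n → ℝ)) := hmon ih
          _ = T (T^[k] b) + c • (1 : Fin n → ℝ) := hah _ _
    have hyz : y ≤ z + c • (1 : Fin n → ℝ) := by
      intro i
      have h := norm_le_pi_norm (y - z) i
      simp only [Pi.sub_apply, Real.norm_eq_abs] at h
      have := (abs_le.mp h).2
      simp only [Pi.add_apply, Pi.smul_apply, Pi.one_apply, smul_eq_mul, mul_one]
      linarith
    have hzy : z ≤ y + c • (1 : Fin n → ℝ) := by
      intro i
      have h := norm_le_pi_norm (y - z) i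
      simp only [Pi.sub_apply, Real.norm_eq_abs] at h
      have := (abs_le.mp h).1
      simp only [Pi.add_apply, Pi.smul_apply, Pi.one_apply, smul_eq_mul, mul_one]
      linarith
    -- coordinatewise bound
    have hbound : ∀ (k : ℕ) (i : Fin n),
        |T^[k] y i - (x i + (t₀ + k) * ν i)| ≤ c := by
      intro k i
      have h1 := hcomp y z hyz k i
      have h2 := hcomp z y hzy k i
      rw [hiter] at h1 h2
      simp only [Pi.add_apply, Pi.smul_apply, Pi.one_apply, smul_eq_mul, mul_one] at h1 h2
      rw [abs_le]
      constructor <;> linarith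
    rw [tendsto_pi_nhds]
    intro i
    have hsub : Tendsto (fun k : ℕ => ((k : ℝ)⁻¹ • T^[k] y) i - ν i) atTop (nhds 0) := by
      refine squeeze_zero_norm' (a := fun k : ℕ => (|x i + t₀ * ν i| + c) / k) ?_
        (tendsto_const_div_atTop_nhds_zero_nat _)
      · filter_upwards [eventually_ge_atTop 1] with k hk
        have hk0 : (0 : ℝ) < (k : ℝ) := by exact_mod_cast hk
        have hb := hbound k i
        have : T^[k] y i - (k : ℝ) * ν i =
            (T^[k] y i - (x i + (t₀ + k) * ν i)) + (x i + t₀ * ν i) := by ring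
        have habs : |T^[k] y i - (k : ℝ) * ν i| ≤ |x i + t₀ * ν i| + c := by
          rw [this]
          calc _ ≤ |T^[k] y i - (x i + (t₀ + k) * ν i)| + |x i + t₀ * ν i| := abs_add_le _ _
            _ ≤ _ := by linarith
        simp only [Pi.smul_apply, smul_eq_mul, Real.norm_eq_abs]
        have : (k : ℝ)⁻¹ * T^[k] y i - ν i = (k : ℝ)⁻¹ * (T^[k] y i - (k : ℝ) * ν i) := by
          field_simp
        rw [this, abs_mul, abs_inv, abs_of_pos hk0, div_eq_inv_mul]
        exact mul_le_mul_of_nonneg_left habs (inv_nonneg.mpr hk0.le)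
    have := hsub.add_const (ν i)
    simpa using this
  exact ⟨key, key 0⟩
end

section
/- Let F : ℝⁿ → ℝⁿ be monotone, additively homogeneous, and positively homogeneous (F(αx) = αF(x) for all x ∈ ℝⁿ and α > 0), and let ν ∈ ℝⁿ be a fixed point of F that is not proportional to the all-ones vector 𝟏. Define T : ℝⁿ → ℝⁿ by T(x) = F(x) + ν. Then lim_{k → ∞} T^k(x)/k = ν for every x ∈ ℝⁿ, and T has no eigenpair: there exist no u ∈ ℝⁿ and λ ∈ ℝ with T(u) = λ𝟏 + u. -/
open Filter

/-- let `F : ℝⁿ → ℝⁿ` be monotone, additively homogeneous and positively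
homogeneous, and let `ν` be a fixed point of `F` not proportional to the all-ones
vector.  Then `T := F + ν` satisfies `T^k(x)/k → ν` for every `x`, and `T` has no
eigenpair. -/
theorem no_eigenpair_of_nontrivial_recession_fixedPoint
    {n : ℕ} (F : (Fin n → ℝ) → (Fin n → ℝ))
    (hmon : Monotone F)
    (hah : ∀ (x : Fin n → ℝ) (c : ℝ), F (x + c • (1 : Fin n → ℝ)) = F x + c • (1 : Fin n → ℝ))
    (hph : ∀ (x : Fin n → ℝ) (a : ℝ), 0 < a → F (a • x) = a • F x)
    (ν : Fin n → ℝ) (hν : F ν = ν)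
    (hnt : ¬ ∃ c : ℝ, ν = c • (1 : Fin n → ℝ)) :
    (∀ x : Fin n → ℝ,
      Tendsto (fun k : ℕ => (k : ℝ)⁻¹ • (fun y => F y + ν)^[k] x) atTop (nhds ν)) ∧
    ¬ ∃ (u : Fin n → ℝ) (lam : ℝ), F u + ν = lam • (1 : Fin n → ℝ) + u := by
  set T : (Fin n → ℝ) → (Fin n → ℝ) := fun y => F y + ν with hT
  -- F is nonexpansive in the sup norm
  have key : ∀ x y : Fin n → ℝ, ‖F x - F y‖ ≤ ‖x - y‖ := by
    intro x y
    have hc : (0:ℝ) ≤ ‖x - y‖ := norm_nonneg _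
    have h1 : F x ≤ F y + ‖x - y‖ • (1 : Fin n → ℝ) := by
      rw [← hah y ‖x - y‖]
      apply hmon
      intro i
      have h := norm_le_pi_norm (x - y) i
      rw [Pi.sub_apply, Real.norm_eq_abs] at h
      have := abs_le.mp h
      simp only [Pi.add_apply, Pi.smul_apply, Pi.one_apply, smul_eq_mul, mul_one]
      linarith [this.2]
    have h2 : F y ≤ F x + ‖x - y‖ • (1 : Fin n → ℝ) := by
      rw [← hah x ‖x - y‖]
      apply hmon
      intro i
      have h := norm_le_pi_norm (x - y) i
      rw [Pi.sub_apply, Real.norm_eq_abs] at h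
      have := abs_le.mp h
      simp only [Pi.add_apply, Pi.smul_apply, Pi.one_apply, smul_eq_mul, mul_one]
      linarith [this.1]
    rw [pi_norm_le_iff_of_nonneg hc]
    intro i
    have e1 := h1 i
    have e2 := h2 i
    simp only [Pi.add_apply, Pi.smul_apply, Pi.one_apply, smul_eq_mul, mul_one] at e1 e2
    rw [Pi.sub_apply, Real.norm_eq_abs, abs_le]
    constructor <;> linarith
  -- iterates of T at ν
  have hiterν : ∀ k : ℕ, T^[k] ν = ((k : ℝ) + 1) • ν := by
    intro k
    induction k with
    | zero => simp
    | succ k ih =>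
      rw [Function.iterate_succ_apply', ih, hT]
      simp only
      have hpos : (0:ℝ) < (k : ℝ) + 1 := by positivity
      rw [hph ν ((k:ℝ)+1) hpos, hν]
      push_cast
      module
  -- iterates of T are nonexpansive
  have hne : ∀ (k : ℕ) (x y : Fin n → ℝ), ‖T^[k] x - T^[k] y‖ ≤ ‖x - y‖ := by
    intro k
    induction k with
    | zero => simp
    | succ k ih =>
      intro x y
      rw [Function.iterate_succ_apply', Function.iterate_succ_apply']
      calc ‖T (T^[k] x) - T (T^[k] y)‖ = ‖F (T^[k] x) - F (T^[k] y)‖ := by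
            simp [hT, add_sub_add_right_eq_sub]
        _ ≤ ‖T^[k] x - T^[k] y‖ := key _ _
        _ ≤ ‖x - y‖ := ih x y
  -- the main limit
  have main : ∀ x : Fin n → ℝ,
      Tendsto (fun k : ℕ => (k : ℝ)⁻¹ • T^[k] x) atTop (nhds ν) := by
    intro x
    rw [← tendsto_sub_nhds_zero_iff]
    refine squeeze_zero_norm' (a := fun k : ℕ => (‖x - ν‖ + ‖ν‖) / (k : ℝ)) ?_
      (tendsto_const_div_atTop_nhds_zero_nat _)
    · filter_upwards [eventually_ge_atTop 1] with k hk
      have hk0 : (0:ℝ) < (k : ℝ) := by exact_mod_cast Nat.lt_of_lt_of_le Nat.zero_lt_one hk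
      have hkne : (k:ℝ) ≠ 0 := ne_of_gt hk0
      have e1 : (k : ℝ)⁻¹ • T^[k] x - ν = (k : ℝ)⁻¹ • (T^[k] x - (k:ℝ) • ν) := by
        rw [smul_sub, smul_smul, inv_mul_cancel₀ hkne, one_smul]
      rw [e1, norm_smul, Real.norm_eq_abs, abs_inv, abs_of_pos hk0]
      rw [div_eq_inv_mul]
      apply mul_le_mul_of_nonneg_left _ (by positivity)
      calc ‖T^[k] x - (k:ℝ) • ν‖
          = ‖(T^[k] x - ((k:ℝ)+1) • ν) + ν‖ := by
            congr 1
            rw [add_smul, one_smul]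
            abel
        _ ≤ ‖T^[k] x - ((k:ℝ)+1) • ν‖ + ‖ν‖ := norm_add_le _ _
        _ ≤ ‖x - ν‖ + ‖ν‖ := by
            have := hne k x ν
            rw [hiterν k] at this
            linarith
  refine ⟨main, ?_⟩
  rintro ⟨u, lam, heq⟩
  have hTu : T u = u + lam • (1 : Fin n → ℝ) := by
    rw [hT]; simp only; rw [heq]; abel
  have hiteru : ∀ k : ℕ, T^[k] u = u + ((k : ℝ) * lam) • (1 : Fin n → ℝ) := by
    intro k
    induction k with
    | zero => simp
    | succ k ih =>
      rw [Function.iterate_succ_apply', ih, hT]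
      simp only
      rw [hah u ((k:ℝ)*lam),
        show F u + ((k:ℝ)*lam) • (1 : Fin n → ℝ) + ν = (F u + ν) + ((k:ℝ)*lam) • (1 : Fin n → ℝ)
          from by abel, heq]
      push_cast
      module
  have hlim2 : Tendsto (fun k : ℕ => (k : ℝ)⁻¹ • T^[k] u) atTop
      (nhds (lam • (1 : Fin n → ℝ))) := by
    have heq2 : ∀ᶠ k : ℕ in atTop,
        (k : ℝ)⁻¹ • T^[k] u = (k : ℝ)⁻¹ • u + lam • (1 : Fin n → ℝ) := by
      filter_upwards [eventually_ge_atTop 1] with k hk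
      have hk0 : (0:ℝ) < (k : ℝ) := by exact_mod_cast Nat.lt_of_lt_of_le Nat.zero_lt_one hk
      have hkne : (k:ℝ) ≠ 0 := ne_of_gt hk0
      rw [hiteru k, smul_add, smul_smul, inv_mul_cancel_left₀ hkne]
    rw [tendsto_congr' heq2]
    have h0 : Tendsto (fun k : ℕ => (k : ℝ)⁻¹ • u) atTop (nhds (0 : Fin n → ℝ)) := by
      have := (tendsto_inv_atTop_nhds_zero_nat (𝕜 := ℝ)).smul_const u
      simpa using this
    have := h0.add (tendsto_const_nhds (x := lam • (1 : Fin n → ℝ)) (f := atTop))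
    simpa using this
  have := tendsto_nhds_unique (main u) hlim2
  exact hnt ⟨lam, this⟩
end
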